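/- Correctness of the Pruning-on-the-Underside rule: if T^k_[ts,te] has tightest time interval [ts',te'] with ts' > ts, then for every start time r with ts < r ≤ ts' and every end time c with te' ≤ c ≤ te, the temporal k-core T^k_[r,c] is identical to T^k_[ts,te]. -/
import Mathlib


abbrev TEdge : Type := ℕ × ℕ × ℤ

/-- Projection of a temporal edge set over time interval [a,b]. -/
def projE (E : Finset TEdge) (a b : ℤ) : Finset TEdge :=
  E.filter (fun e => a ≤ e.2.2 ∧ e.2.2 ≤ b)

def verts (E : Finset TEdge) : Finset ℕ :=
  E.image (fun e => e.1) ∪ E.image (fun e => e.2.1)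

/-- Distinct neighbors of `v` inside vertex set `S` via edges of `E`. -/
def nbrs (E : Finset TEdge) (S : Finset ℕ) (v : ℕ) : Finset ℕ :=
  S.filter (fun u => u ≠ v ∧
    (E.filter (fun e => (e.1 = u ∧ e.2.1 = v) ∨ (e.1 = v ∧ e.2.1 = u))).Nonempty)

/-- `S` is a `k`-core candidate: every vertex of `S` has ≥ k distinct neighbors in `S`. -/
def isCoreSet (E : Finset TEdge) (k : ℕ) (S : Finset ℕ) : Prop :=
  ∀ v ∈ S, k ≤ (nbrs E S v).card

instance (E : Finset TEdge) (k : ℕ) : DecidablePred (isCoreSet E k) := fun S => by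
  unfold isCoreSet; infer_instance

/-- The `k`-core vertex set of a temporal edge set: union of all candidates. -/
def core (E : Finset TEdge) (k : ℕ) : Finset ℕ :=
  ((verts E).powerset.filter (isCoreSet E k)).sup id

/-- The edges of `E` induced among the `k`-core vertices. -/
def coreEdges (E : Finset TEdge) (k : ℕ) : Finset TEdge :=
  E.filter (fun e => e.1 ∈ core E k ∧ e.2.1 ∈ core E k)

/-- Vertices of the temporal k-core of interval [a,b]. -/
def coreV (E : Finset TEdge) (k : ℕ) (a b : ℤ) : Finset ℕ :=
  core (projE E a b) k

/-- Temporal edges of the temporal k-core of interval [a,b]. -/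
def coreE (E : Finset TEdge) (k : ℕ) (a b : ℤ) : Finset TEdge :=
  coreEdges (projE E a b) k

/-- Two intervals induce identical temporal k-cores (same vertices and temporal edges). -/
def identCore (E : Finset TEdge) (k : ℕ) (a b a' b' : ℤ) : Prop :=
  coreV E k a b = coreV E k a' b' ∧ coreE E k a b = coreE E k a' b'


lemma nbrs_mono_S {E : Finset TEdge} {S S' : Finset ℕ} (hs : S ⊆ S') (v : ℕ) :
    nbrs E S v ⊆ nbrs E S' v := Finset.filter_subset_filter _ hs

lemma nbrs_mono_E {E E' : Finset TEdge} (hE : E ⊆ E') (S : Finset ℕ) (v : ℕ) :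
    nbrs E S v ⊆ nbrs E' S v := by
  intro u hu
  simp only [nbrs, Finset.mem_filter] at hu ⊢
  obtain ⟨hS, hne, e, he⟩ := hu
  exact ⟨hS, hne, e, Finset.mem_filter.2 ⟨hE (Finset.mem_filter.1 he).1,
    (Finset.mem_filter.1 he).2⟩⟩

lemma mem_verts {E : Finset TEdge} {v : ℕ} :
    v ∈ verts E ↔ ∃ e ∈ E, e.1 = v ∨ e.2.1 = v := by
  simp only [verts, Finset.mem_union, Finset.mem_image]
  constructor
  · rintro (⟨e, he, rfl⟩ | ⟨e, he, rfl⟩)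
    · exact ⟨e, he, Or.inl rfl⟩
    · exact ⟨e, he, Or.inr rfl⟩
  · rintro ⟨e, he, rfl | rfl⟩
    · exact Or.inl ⟨e, he, rfl⟩
    · exact Or.inr ⟨e, he, rfl⟩

lemma verts_mono {E E' : Finset TEdge} (hE : E ⊆ E') : verts E ⊆ verts E' := by
  intro v hv
  rw [mem_verts] at hv ⊢
  obtain ⟨e, he, hp⟩ := hv
  exact ⟨e, hE he, hp⟩

lemma core_isCoreSet (E : Finset TEdge) (k : ℕ) : isCoreSet E k (core E k) := by
  intro v hv
  rw [core, Finset.mem_sup] at hv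
  obtain ⟨S, hS, hvS⟩ := hv
  obtain ⟨hpow, hcs⟩ := Finset.mem_filter.1 hS
  calc k ≤ (nbrs E S v).card := hcs v hvS
    _ ≤ (nbrs E (core E k) v).card :=
        Finset.card_le_card (nbrs_mono_S (Finset.le_sup (f := id) hS) v)

lemma core_subset_verts (E : Finset TEdge) (k : ℕ) : core E k ⊆ verts E := by
  have : core E k ≤ verts E :=
    Finset.sup_le fun S hS => Finset.mem_powerset.1 (Finset.mem_filter.1 hS).1
  exact this

lemma subset_core {E : Finset TEdge} {k : ℕ} {S : Finset ℕ}
    (h1 : isCoreSet E k S) (h2 : S ⊆ verts E) : S ⊆ core E k :=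
  Finset.le_sup (f := id) (Finset.mem_filter.2 ⟨Finset.mem_powerset.2 h2, h1⟩)

lemma core_zero (E : Finset TEdge) : core E 0 = verts E :=
  le_antisymm (core_subset_verts E 0)
    (subset_core (fun _ _ => Nat.zero_le _) (le_refl _))

/-- correctness of Pruning-on-the-Underside: if the TTI [ts',te'] of
the nonempty core T^k_[ts,te] satisfies ts' > ts, then for every r with
ts < r ≤ ts' and every c with te' ≤ c ≤ te, T^k_[r,c] is identical to T^k_[ts,te]. -/
theorem stmt_9 (E : Finset TEdge) (k : ℕ) (ts te ts' te' : ℤ)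
    (h : (coreE E k ts te).Nonempty)
    (hmin : IsLeast {t : ℤ | ∃ e ∈ coreE E k ts te, e.2.2 = t} ts')
    (hmax : IsGreatest {t : ℤ | ∃ e ∈ coreE E k ts te, e.2.2 = t} te')
    (hgt : ts < ts') :
    ∀ r c : ℤ, ts < r → r ≤ ts' → te' ≤ c → c ≤ te →
      identCore E k r c ts te := by
  intro r c hr1 hr2 hc1 hc2
  set A := projE E ts te with hA
  set B := projE E r c with hB
  have hBA : B ⊆ A := by
    intro e he
    simp only [hB, hA, projE, Finset.mem_filter] at he ⊢
    exact ⟨he.1, le_trans hr1.le he.2.1, le_trans he.2.2 hc2⟩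
  -- key: edges of A with both endpoints in core A k lie in B
  have key : ∀ e ∈ A, e.1 ∈ core A k → e.2.1 ∈ core A k → e ∈ B := by
    intro e heA h1 h2
    have hce : e ∈ coreE E k ts te := by
      simp only [coreE, coreEdges, Finset.mem_filter]
      exact ⟨heA, h1, h2⟩
    have hl : ts' ≤ e.2.2 := hmin.2 ⟨e, hce, rfl⟩
    have hu : e.2.2 ≤ te' := hmax.2 ⟨e, hce, rfl⟩
    have heE : e ∈ E := (Finset.mem_filter.1 heA).1
    simp only [hB, projE, Finset.mem_filter]
    exact ⟨heE, le_trans hr2 hl, le_trans hu hc1⟩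
  have hnbrs : ∀ v ∈ core A k, nbrs A (core A k) v ⊆ nbrs B (core A k) v := by
    intro v hv u hu
    simp only [nbrs, Finset.mem_filter] at hu ⊢
    obtain ⟨hS, hne, e, he⟩ := hu
    obtain ⟨heA, hpat⟩ := Finset.mem_filter.1 he
    have heB : e ∈ B := by
      rcases hpat with ⟨h1, h2⟩ | ⟨h1, h2⟩
      · exact key e heA (by rw [h1]; exact hS) (by rw [h2]; exact hv)
      · exact key e heA (by rw [h1]; exact hv) (by rw [h2]; exact hS)
    exact ⟨hS, hne, e, Finset.mem_filter.2 ⟨heB, hpat⟩⟩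
  have hcsB : isCoreSet B k (core A k) := by
    intro v hv
    calc k ≤ (nbrs A (core A k) v).card := core_isCoreSet A k v hv
      _ ≤ (nbrs B (core A k) v).card := Finset.card_le_card (hnbrs v hv)
  have hsubV : core A k ⊆ verts B := by
    intro v hv
    rcases Nat.eq_zero_or_pos k with hk | hk
    · subst hk
      have hv' : v ∈ verts A := by rw [← core_zero]; exact hv
      rw [mem_verts] at hv'
      obtain ⟨e, heA, hp⟩ := hv'
      have h1 : e.1 ∈ core A 0 := by
        rw [core_zero, mem_verts]; exact ⟨e, heA, Or.inl rfl⟩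
      have h2 : e.2.1 ∈ core A 0 := by
        rw [core_zero, mem_verts]; exact ⟨e, heA, Or.inr rfl⟩
      exact mem_verts.2 ⟨e, key e heA h1 h2, hp⟩
    · have hcard : 0 < (nbrs A (core A k) v).card :=
        lt_of_lt_of_le hk (core_isCoreSet A k v hv)
      obtain ⟨u, hu⟩ := Finset.card_pos.1 hcard
      simp only [nbrs, Finset.mem_filter] at hu
      obtain ⟨hS, hne, e, he⟩ := hu
      obtain ⟨heA, hpat⟩ := Finset.mem_filter.1 he
      have heB : e ∈ B := by
        rcases hpat with ⟨h1, h2⟩ | ⟨h1, h2⟩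
        · exact key e heA (by rw [h1]; exact hS) (by rw [h2]; exact hv)
        · exact key e heA (by rw [h1]; exact hv) (by rw [h2]; exact hS)
      rw [mem_verts]
      rcases hpat with ⟨h1, h2⟩ | ⟨h1, h2⟩
      · exact ⟨e, heB, Or.inr h2⟩
      · exact ⟨e, heB, Or.inl h1⟩
  have hcoreEq : core B k = core A k := by
    apply le_antisymm
    · apply subset_core
      · intro v hv
        calc k ≤ (nbrs B (core B k) v).card := core_isCoreSet B k v hv
          _ ≤ (nbrs A (core B k) v).card :=
              Finset.card_le_card (nbrs_mono_E hBA _ v)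
      · exact (core_subset_verts B k).trans (verts_mono hBA)
    · exact subset_core hcsB hsubV
  have hE : coreEdges B k = coreEdges A k := by
    ext e
    simp only [coreEdges, Finset.mem_filter, hcoreEq]
    constructor
    · rintro ⟨heB, h1, h2⟩
      exact ⟨hBA heB, h1, h2⟩
    · rintro ⟨heA, h1, h2⟩
      exact ⟨key e heA h1 h2, h1, h2⟩
  exact ⟨hcoreEq, hE⟩
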